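/- Let $n \ge 1$, let $k, r \ge 1$ be natural numbers, let $\tau, \mu \in \mathbb{C}^n$, and let $g : \mathbb{C} \to \mathbb{C}^n$ satisfy $g(t) - \tau t^k - \mu t^{k+r} = o(t^{k+r})$ as $t \to 0$. Let $c \in \mathbb{C} \setminus \{0\}$ and let $\varphi : \mathbb{C} \to \mathbb{C}$ satisfy $\varphi(t) - c t = o(t)$ as $t \to 0$. Then $$\frac{1}{t^{k+r}}\Big(g(\varphi(t)) - \frac{\varphi(t)^k}{t^k}\, g(t)\Big) \longrightarrow c^k (c^r - 1)\, \mu$$ as $t \to 0$ along $t \ne 0$. In particular, if $\mu \ne 0$ and $c^r \ne 1$, the limit is a nonzero multiple of $\mu$. -/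

import Mathlib

open Filter Asymptotics Topology

/-- The key limit computation in the proof of Theorem 3.2 of the paper. -/
theorem stmt_9 (n : ℕ) (hn : 1 ≤ n) (k r : ℕ) (hk : 1 ≤ k) (hr : 1 ≤ r)
    (τ μ : Fin n → ℂ) (g : ℂ → Fin n → ℂ)
    (hg : (fun t => g t - t ^ k • τ - t ^ (k + r) • μ)
      =o[𝓝[≠] (0:ℂ)] fun t => t ^ (k + r))
    (c : ℂ) (hc : c ≠ 0) (φ : ℂ → ℂ)
    (hφ : (fun t => φ t - c * t) =o[𝓝[≠] (0:ℂ)] fun t => t) :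
    Tendsto (fun t => (t ^ (k + r))⁻¹ • (g (φ t) - (φ t ^ k / t ^ k) • g t))
      (𝓝[≠] (0:ℂ)) (𝓝 ((c ^ k * (c ^ r - 1)) • μ)) ∧
    (μ ≠ 0 → c ^ r ≠ 1 → (c ^ k * (c ^ r - 1)) • μ ≠ 0) := by
  set L := 𝓝[≠] (0:ℂ)
  set e : ℂ → Fin n → ℂ := fun t => g t - t ^ k • τ - t ^ (k + r) • μ with he
  -- φ t / t → c
  have hq : Tendsto (fun t => φ t / t) L (𝓝 c) := by
    have h1 : Tendsto (fun t => (φ t - c * t) / t) L (𝓝 0) := hφ.tendsto_div_nhds_zero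
    have h2 : Tendsto (fun t => (φ t - c * t) / t + c) L (𝓝 (0 + c)) := h1.add tendsto_const_nhds
    rw [zero_add] at h2
    refine h2.congr' ?_
    filter_upwards [self_mem_nhdsWithin] with t (ht : t ≠ 0)
    field_simp
    ring
  have hqne : ∀ᶠ t in L, φ t / t ≠ 0 :=
    hq.eventually_ne hc
  have hφne : ∀ᶠ t in L, φ t ≠ 0 := by
    filter_upwards [hqne, self_mem_nhdsWithin] with t h (ht : t ≠ 0)
    intro h0; exact h (by simp [h0])
  have hφ0 : Tendsto φ L (𝓝[≠] (0:ℂ)) := by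
    refine tendsto_nhdsWithin_iff.mpr ⟨?_, hφne⟩
    have : Tendsto (fun t => (φ t / t) * t) L (𝓝 (c * 0)) :=
      hq.mul (tendsto_nhdsWithin_of_tendsto_nhds tendsto_id)
    rw [mul_zero] at this
    refine this.congr' ?_
    filter_upwards [self_mem_nhdsWithin] with t (ht : t ≠ 0)
    field_simp
  have hE : Tendsto (fun t => (t ^ (k + r))⁻¹ • e t) L (𝓝 0) :=
    hg.tendsto_inv_smul_nhds_zero
  have hEφ : Tendsto (fun t => (φ t ^ (k + r))⁻¹ • e (φ t)) L (𝓝 0) := hE.comp hφ0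
  have hmain : Tendsto (fun t => (t ^ (k + r))⁻¹ • (g (φ t) - (φ t ^ k / t ^ k) • g t))
      L (𝓝 ((c ^ k * (c ^ r - 1)) • μ)) := by
    have hT : Tendsto (fun t =>
        ((φ t / t) ^ k * ((φ t / t) ^ r - 1)) • μ
        + (φ t / t) ^ (k + r) • ((φ t ^ (k + r))⁻¹ • e (φ t))
        - (φ t / t) ^ k • ((t ^ (k + r))⁻¹ • e t)) L
        (𝓝 ((c ^ k * (c ^ r - 1)) • μ + c ^ (k + r) • (0:Fin n → ℂ) - c ^ k • 0)) := by
      exact (((((hq.pow k).mul ((hq.pow r).sub tendsto_const_nhds)).smul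
        (tendsto_const_nhds : Tendsto (fun _ : ℂ => μ) L (𝓝 μ))).add
        ((hq.pow (k+r)).smul hEφ)).sub ((hq.pow k).smul hE))
    simp only [smul_zero, add_zero, sub_zero] at hT
    refine hT.congr' ?_
    filter_upwards [self_mem_nhdsWithin, hφne] with t (ht : t ≠ 0) hpt
    have hg1 : g (φ t) = φ t ^ k • τ + φ t ^ (k + r) • μ + e (φ t) := by
      simp [he]
    have hg2 : g t = t ^ k • τ + t ^ (k + r) • μ + e t := by
      simp [he]
    rw [hg1, hg2]
    have htk : (t:ℂ) ^ (k+r) ≠ 0 := pow_ne_zero _ ht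
    have htk' : (t:ℂ) ^ k ≠ 0 := pow_ne_zero _ ht
    have hpk : (φ t) ^ (k+r) ≠ 0 := pow_ne_zero _ hpt
    match_scalars <;> simp only [div_pow, ← pow_add] <;> field_simp <;> ring
  refine ⟨hmain, fun hμ hcr => ?_⟩
  exact smul_ne_zero (mul_ne_zero (pow_ne_zero _ hc) (sub_ne_zero.mpr hcr)) hμ
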